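/- There exists a finite connected simple graph G with at least one edge such that reg(G) = Δ(G) + 1; in particular, the bound reg(G) ≤ Δ(G) does not hold for all connected graphs. -/

import Mathlib

set_option maxRecDepth 4000


open SimpleGraph

variable {V : Type*}

/-- The number of edges of the edge set `F` incident with the vertex `v`. -/
noncomputable def edgeDeg (F : Set (Sym2 V)) (v : V) : ℕ := {e ∈ F | v ∈ e}.ncard

/-- The subgraph induced by the edge set `F` (on the vertices incident with edges of `F`)
is `r`-regular: every vertex incident with an edge of `F` lies on exactly `r` edges of `F`. -/
def IsRegularEdgeSet (F : Set (Sym2 V)) (r : ℕ) : Prop :=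
  ∀ v : V, (∃ e ∈ F, v ∈ e) → edgeDeg F v = r

/-- `P` is a partition of the edge set of `G` into `t` nonempty parts, each of which
induces a regular subgraph. -/
def IsRegularPartition (G : SimpleGraph V) {t : ℕ} (P : Fin t → Set (Sym2 V)) : Prop :=
  (∀ i, (P i).Nonempty) ∧ (∀ i j, i ≠ j → Disjoint (P i) (P j)) ∧
    (⋃ i, P i) = G.edgeSet ∧ ∀ i, ∃ r, IsRegularEdgeSet (P i) r

/-- The regular number of `G`: the minimum number of parts in a partition of the edge set of `G`
into nonempty subsets each of which induces a regular subgraph. -/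
noncomputable def regNum (G : SimpleGraph V) : ℕ :=
  sInf {t | ∃ P : Fin t → Set (Sym2 V), IsRegularPartition G P}

/-- `C` is a proper edge coloring of `G` with `n` colors: edges sharing a vertex get
distinct colors. -/
def IsProperEdgeColoring (G : SimpleGraph V) {n : ℕ} (C : Sym2 V → Fin n) : Prop :=
  ∀ e₁ ∈ G.edgeSet, ∀ e₂ ∈ G.edgeSet, e₁ ≠ e₂ → (∃ x, x ∈ e₁ ∧ x ∈ e₂) → C e₁ ≠ C e₂

/-- The edge chromatic number of `G`: the minimum number of colors of a proper edge coloring. -/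
noncomputable def edgeChromNum (G : SimpleGraph V) : ℕ :=
  sInf {n | ∃ C : Sym2 V → Fin n, IsProperEdgeColoring G C}

namespace RegCounter

/-- The edge list of our counterexample graph on `Fin 8`:
vertex 0 with pendants 1, 2 and a bridge to 3; 3 is the subdivision vertex of a
subdivided `K₄` on `{4,5,6,7}` (edge `6-7` of the `K₄` is subdivided by `3`). -/
def L : List (Fin 8 × Fin 8) :=
  [(0,1), (0,2), (0,3), (4,5), (4,6), (4,7), (5,6), (5,7), (3,6), (3,7)]

def Gr : SimpleGraph (Fin 8) where
  Adj a b := (a, b) ∈ L ∨ (b, a) ∈ L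
  symm := by constructor; intro a b h; exact h.symm
  loopless := by
    have h : ∀ a : Fin 8, ¬((a, a) ∈ L ∨ (a, a) ∈ L) := by decide
    exact ⟨h⟩

instance : DecidableRel Gr.Adj := fun a b =>
  inferInstanceAs (Decidable ((a, b) ∈ L ∨ (b, a) ∈ L))

lemma edgeDeg_def (F : Set (Sym2 (Fin 8))) (v : Fin 8) :
    edgeDeg F v = {e ∈ F | v ∈ e}.ncard := rfl

/-- Only the edge `s(0,1)` of `Gr` contains the pendant vertex `1`. -/
lemma key1 : ∀ e ∈ Gr.edgeSet, (1 : Fin 8) ∈ e → e = s(0,1) := by decide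

/-- Only the edge `s(0,2)` of `Gr` contains the pendant vertex `2`. -/
lemma key2 : ∀ e ∈ Gr.edgeSet, (2 : Fin 8) ∈ e → e = s(0,2) := by decide

/-- The edges of `Gr` containing `0`. -/
lemma key0 : ∀ e ∈ Gr.edgeSet, (0 : Fin 8) ∈ e →
    e = s(0,1) ∨ e = s(0,2) ∨ e = s(0,3) := by decide

lemma pendant_bound1 {F : Set (Sym2 (Fin 8))} (hF : F ⊆ Gr.edgeSet) :
    edgeDeg F 1 ≤ 1 := by
  have h : {e ∈ F | (1 : Fin 8) ∈ e} ⊆ {s(0,1)} := by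
    rintro e ⟨he, h1⟩
    exact key1 e (hF he) h1
  rw [edgeDeg_def]
  simpa only [Set.ncard_singleton] using Set.ncard_le_ncard h (Set.finite_singleton _)

lemma pendant_bound2 {F : Set (Sym2 (Fin 8))} (hF : F ⊆ Gr.edgeSet) :
    edgeDeg F 2 ≤ 1 := by
  have h : {e ∈ F | (2 : Fin 8) ∈ e} ⊆ {s(0,2)} := by
    rintro e ⟨he, h2⟩
    exact key2 e (hF he) h2
  rw [edgeDeg_def]
  simpa only [Set.ncard_singleton] using Set.ncard_le_ncard h (Set.finite_singleton _)

lemma one_le_edgeDeg {F : Set (Sym2 (Fin 8))} {e : Sym2 (Fin 8)} (he : e ∈ F)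
    {w : Fin 8} (hw : w ∈ e) : 1 ≤ edgeDeg F w := by
  rw [edgeDeg_def]
  exact (Set.ncard_pos (Set.toFinite _)).mpr ⟨e, he, hw⟩

lemma two_le_edgeDeg {F : Set (Sym2 (Fin 8))} {a b : Sym2 (Fin 8)} (ha : a ∈ F) (hb : b ∈ F)
    (hab : a ≠ b) {w : Fin 8} (hwa : w ∈ a) (hwb : w ∈ b) : 2 ≤ edgeDeg F w := by
  have h : ({a, b} : Set (Sym2 (Fin 8))) ⊆ {e ∈ F | w ∈ e} := by
    rintro x (rfl | rfl)
    · exact ⟨ha, hwa⟩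
    · exact ⟨hb, hwb⟩
  have := Set.ncard_le_ncard h (Set.toFinite _)
  rwa [Set.ncard_pair hab] at this

/-- Any part of a regular partition of `Gr` containing an edge at vertex `0` is a matching. -/
lemma part_one_regular {F : Set (Sym2 (Fin 8))} (hF : F ⊆ Gr.edgeSet) {r : ℕ}
    (hreg : IsRegularEdgeSet F r)
    (hin : s(0,1) ∈ F ∨ s(0,2) ∈ F ∨ s(0,3) ∈ F) : r = 1 := by
  have case1 : s(0,1) ∈ F → r = 1 := by
    intro h1
    have hr := hreg 1 ⟨s(0,1), h1, by decide⟩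
    have hle := pendant_bound1 hF
    have hge := one_le_edgeDeg h1 (by decide : (1 : Fin 8) ∈ s(0,1))
    omega
  have case2 : s(0,2) ∈ F → r = 1 := by
    intro h2
    have hr := hreg 2 ⟨s(0,2), h2, by decide⟩
    have hle := pendant_bound2 hF
    have hge := one_le_edgeDeg h2 (by decide : (2 : Fin 8) ∈ s(0,2))
    omega
  rcases hin with h1 | h2 | h3
  · exact case1 h1
  · exact case2 h2
  · by_cases h1 : s(0,1) ∈ F
    · exact case1 h1
    by_cases h2 : s(0,2) ∈ F
    · exact case2 h2
    have hset : {e ∈ F | (0 : Fin 8) ∈ e} = {s(0,3)} := by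
      apply Set.Subset.antisymm
      · rintro e ⟨he, h0⟩
        rcases key0 e (hF he) h0 with rfl | rfl | rfl
        · exact absurd he h1
        · exact absurd he h2
        · rfl
      · rintro e rfl
        exact ⟨h3, by decide⟩
    have hr := hreg 0 ⟨s(0,3), h3, by decide⟩
    rw [edgeDeg_def, hset, Set.ncard_singleton] at hr
    omega

/-- The seven internal edges of the gadget. -/
def Ie : Finset (Sym2 (Fin 8)) :=
  {s(4,5), s(4,6), s(4,7), s(5,6), s(5,7), s(3,6), s(3,7)}

lemma tripleShare : ∀ a ∈ Ie, ∀ b ∈ Ie, ∀ c ∈ Ie, a ≠ b → a ≠ c → b ≠ c →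
    ∃ w : Fin 8, (w ∈ a ∧ w ∈ b) ∨ (w ∈ a ∧ w ∈ c) ∨ (w ∈ b ∧ w ∈ c) := by decide

/-- A matching contains at most two of the seven internal gadget edges (they span only
five vertices). -/
lemma matching_cap {F : Set (Sym2 (Fin 8))} (h1 : IsRegularEdgeSet F 1) :
    (F ∩ ↑Ie).ncard ≤ 2 := by
  by_contra hcon
  push_neg at hcon
  obtain ⟨T, hTsub, hT3⟩ := Set.exists_subset_card_eq (n := 3) hcon
  obtain ⟨a, b, c, hab, hac, hbc, rfl⟩ := Set.ncard_eq_three.mp hT3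
  have ha := hTsub (by simp : a ∈ ({a, b, c} : Set _))
  have hb := hTsub (by simp : b ∈ ({a, b, c} : Set _))
  have hc := hTsub (by simp : c ∈ ({a, b, c} : Set _))
  obtain ⟨w, hw⟩ := tripleShare a ha.2 b hb.2 c hc.2 hab hac hbc
  have contra : ∀ p q : Sym2 (Fin 8), p ∈ F → q ∈ F → p ≠ q →
      w ∈ p → w ∈ q → False := by
    intro p q hp hq hpq hwp hwq
    have := two_le_edgeDeg hp hq hpq hwp hwq
    have := h1 w ⟨p, hp, hwp⟩
    omega
  rcases hw with ⟨h, h'⟩ | ⟨h, h'⟩ | ⟨h, h'⟩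
  · exact contra a b ha.1 hb.1 hab h h'
  · exact contra a c ha.1 hc.1 hac h h'
  · exact contra b c hb.1 hc.1 hbc h h'

/-- A matching (given as a `Finset` of pairwise vertex-disjoint edges) is `1`-regular. -/
lemma matching_regular (s : Finset (Sym2 (Fin 8)))
    (h : ∀ p ∈ s, ∀ q ∈ s, ∀ w : Fin 8, w ∈ p → w ∈ q → p = q) :
    IsRegularEdgeSet (↑s : Set (Sym2 (Fin 8))) 1 := by
  rintro v ⟨e, he, hve⟩
  have hset : {x ∈ (↑s : Set (Sym2 (Fin 8))) | v ∈ x} = {e} := by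
    apply Set.Subset.antisymm
    · rintro x ⟨hx, hvx⟩
      exact h x hx e he v hvx hve
    · rintro x rfl
      exact ⟨he, hve⟩
  rw [edgeDeg_def, hset, Set.ncard_singleton]

/-- The four matchings of the explicit partition. -/
def Ms : Fin 4 → Finset (Sym2 (Fin 8)) :=
  ![{s(0,1), s(3,6), s(4,7)}, {s(0,2), s(3,7), s(4,5)}, {s(0,3), s(4,6), s(5,7)}, {s(5,6)}]

lemma upper : IsRegularPartition Gr (fun i => (↑(Ms i) : Set (Sym2 (Fin 8)))) := by
  refine ⟨?_, ?_, ?_, ?_⟩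
  · intro i
    fin_cases i
    · exact ⟨s(0,1), by decide⟩
    · exact ⟨s(0,2), by decide⟩
    · exact ⟨s(0,3), by decide⟩
    · exact ⟨s(5,6), by decide⟩
  · intro i j hij
    rw [Set.disjoint_iff_inter_eq_empty]
    fin_cases i <;> fin_cases j <;> first
      | exact absurd rfl hij
      | (rw [← Finset.coe_inter]; norm_cast)
  · refine Set.ext fun e => ?_
    induction e using Sym2.inductionOn with
    | hf a b =>
      simp only [Set.mem_iUnion, Finset.mem_coe]
      constructor
      · rintro ⟨i, hi⟩
        revert hi
        fin_cases i <;> revert a b <;> decide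
      · intro h
        revert h
        revert a b
        decide
  · intro i
    refine ⟨1, matching_regular _ ?_⟩
    fin_cases i <;> decide

lemma lower {t : ℕ} (P : Fin t → Set (Sym2 (Fin 8))) (hP : IsRegularPartition Gr P) :
    4 ≤ t := by
  by_contra hcon
  push_neg at hcon
  obtain ⟨hne, hdisj, hcup, hregs⟩ := hP
  have hsub : ∀ i, P i ⊆ Gr.edgeSet := fun i => hcup ▸ Set.subset_iUnion P i
  have h01 : s(0,1) ∈ ⋃ i, P i := hcup ▸ (by decide : s(0,1) ∈ Gr.edgeSet)
  have h02 : s(0,2) ∈ ⋃ i, P i := hcup ▸ (by decide : s(0,2) ∈ Gr.edgeSet)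
  have h03 : s(0,3) ∈ ⋃ i, P i := hcup ▸ (by decide : s(0,3) ∈ Gr.edgeSet)
  obtain ⟨i1, hi1⟩ := Set.mem_iUnion.mp h01
  obtain ⟨i2, hi2⟩ := Set.mem_iUnion.mp h02
  obtain ⟨i3, hi3⟩ := Set.mem_iUnion.mp h03
  have pairImp : ∀ (j : Fin t) (a b : Sym2 (Fin 8)), a ∈ P j → b ∈ P j → a ≠ b →
      (0 : Fin 8) ∈ a → (0 : Fin 8) ∈ b → False := by
    intro j a b ha hb hab h0a h0b
    obtain ⟨r, hr⟩ := hregs j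
    have hr1 : r = 1 := by
      apply part_one_regular (hsub j) hr
      rcases key0 a (hsub j ha) h0a with rfl | rfl | rfl
      · exact Or.inl ha
      · exact Or.inr (Or.inl ha)
      · exact Or.inr (Or.inr ha)
    have h2 := two_le_edgeDeg ha hb hab h0a h0b
    have := hr 0 ⟨a, ha, h0a⟩
    omega
  have h12 : i1 ≠ i2 := by
    rintro rfl
    exact pairImp i1 _ _ hi1 hi2 (by decide) (by decide) (by decide)
  have h13 : i1 ≠ i3 := by
    rintro rfl
    exact pairImp i1 _ _ hi1 hi3 (by decide) (by decide) (by decide)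
  have h23 : i2 ≠ i3 := by
    rintro rfl
    exact pairImp i2 _ _ hi2 hi3 (by decide) (by decide) (by decide)
  have hcover : ∀ j : Fin t, j = i1 ∨ j = i2 ∨ j = i3 := by
    intro j
    by_contra hj
    push_neg at hj
    obtain ⟨hj1, hj2, hj3⟩ := hj
    have hcard : ({j, i1, i2, i3} : Finset (Fin t)).card = 4 := by
      rw [Finset.card_insert_of_notMem (by simp [hj1, hj2, hj3]),
        Finset.card_insert_of_notMem (by simp [h12, h13]),
        Finset.card_insert_of_notMem (by simp [h23]), Finset.card_singleton]
    have hle := Finset.card_le_univ ({j, i1, i2, i3} : Finset (Fin t))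
    rw [hcard, Fintype.card_fin] at hle
    omega
  have hreg1 : ∀ j : Fin t, IsRegularEdgeSet (P j) 1 := by
    intro j
    obtain ⟨r, hr⟩ := hregs j
    have : r = 1 := by
      apply part_one_regular (hsub j) hr
      rcases hcover j with rfl | rfl | rfl
      · exact Or.inl hi1
      · exact Or.inr (Or.inl hi2)
      · exact Or.inr (Or.inr hi3)
    exact this ▸ hr
  have hIsub : (↑Ie : Set (Sym2 (Fin 8))) ⊆ P i1 ∪ P i2 ∪ P i3 := by
    intro e he
    have heE : e ∈ ⋃ i, P i := hcup ▸ (by decide : ∀ x ∈ Ie, x ∈ Gr.edgeSet) e he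
    obtain ⟨j, hj⟩ := Set.mem_iUnion.mp heE
    rcases hcover j with rfl | rfl | rfl
    · exact Or.inl (Or.inl hj)
    · exact Or.inl (Or.inr hj)
    · exact Or.inr hj
  have hIe7 : (↑Ie : Set (Sym2 (Fin 8))).ncard = 7 := by
    rw [Set.ncard_coe_finset]; decide
  have hsplit : (↑Ie : Set (Sym2 (Fin 8))) =
      (P i1 ∩ ↑Ie) ∪ (P i2 ∩ ↑Ie) ∪ (P i3 ∩ ↑Ie) := by
    rw [← Set.union_inter_distrib_right, ← Set.union_inter_distrib_right]
    exact (Set.inter_eq_self_of_subset_right hIsub).symm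
  have hle : (↑Ie : Set (Sym2 (Fin 8))).ncard ≤
      (P i1 ∩ ↑Ie).ncard + (P i2 ∩ ↑Ie).ncard + (P i3 ∩ ↑Ie).ncard := by
    calc (↑Ie : Set (Sym2 (Fin 8))).ncard
        = ((P i1 ∩ ↑Ie) ∪ (P i2 ∩ ↑Ie) ∪ (P i3 ∩ ↑Ie)).ncard := by rw [← hsplit]
      _
        ≤ ((P i1 ∩ ↑Ie) ∪ (P i2 ∩ ↑Ie)).ncard + (P i3 ∩ ↑Ie).ncard :=
          Set.ncard_union_le _ _
      _ ≤ (P i1 ∩ ↑Ie).ncard + (P i2 ∩ ↑Ie).ncard + (P i3 ∩ ↑Ie).ncard := by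
          have := Set.ncard_union_le (P i1 ∩ ↑Ie) (P i2 ∩ ↑Ie)
          omega
  have c1 := matching_cap (hreg1 i1)
  have c2 := matching_cap (hreg1 i2)
  have c3 := matching_cap (hreg1 i3)
  omega

lemma regNum_Gr : regNum Gr = 4 := by
  have h4 : (4 : ℕ) ∈ {t | ∃ P : Fin t → Set (Sym2 (Fin 8)), IsRegularPartition Gr P} :=
    ⟨_, upper⟩
  refine le_antisymm (Nat.sInf_le h4) (le_csInf ⟨4, h4⟩ ?_)
  rintro t ⟨P, hP⟩
  exact lower P hP

lemma maxDegree_Gr : Gr.maxDegree = 3 := by decide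

lemma connected_Gr : Gr.Connected := by
  rw [SimpleGraph.connected_iff]
  refine ⟨?_, ⟨0⟩⟩
  have h : ∀ w : Fin 8, Gr.Reachable 0 w := by
    intro w
    fin_cases w
    · exact SimpleGraph.Reachable.refl _
    · exact (by decide : Gr.Adj 0 1).reachable
    · exact (by decide : Gr.Adj 0 2).reachable
    · exact (by decide : Gr.Adj 0 3).reachable
    · exact ((by decide : Gr.Adj 0 3).reachable.trans
        (by decide : Gr.Adj 3 6).reachable).trans (by decide : Gr.Adj 6 4).reachable
    · exact ((by decide : Gr.Adj 0 3).reachable.trans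
        (by decide : Gr.Adj 3 6).reachable).trans (by decide : Gr.Adj 6 5).reachable
    · exact (by decide : Gr.Adj 0 3).reachable.trans (by decide : Gr.Adj 3 6).reachable
    · exact (by decide : Gr.Adj 0 3).reachable.trans (by decide : Gr.Adj 3 7).reachable
  exact fun a b => (h a).symm.trans (h b)

end RegCounter

/-- there is a finite connected simple graph `G` with at least one edge
such that `reg(G) = Δ(G) + 1`; in particular `reg(G) ≤ Δ(G)` fails for this graph. -/

theorem exists_connected_regNum_eq_maxDegree_add_one :
    ∃ (W : Type) (_ : Fintype W) (G : SimpleGraph W) (_ : DecidableRel G.Adj),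
      G.Connected ∧ G.edgeSet.Nonempty ∧
        regNum G = G.maxDegree + 1 ∧ ¬regNum G ≤ G.maxDegree := by
  refine ⟨Fin 8, inferInstance, RegCounter.Gr, inferInstance, RegCounter.connected_Gr,
    ⟨s(0,1), by decide⟩, ?_, ?_⟩
  · rw [RegCounter.regNum_Gr, RegCounter.maxDegree_Gr]
  · rw [RegCounter.regNum_Gr, RegCounter.maxDegree_Gr]; omega
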